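/- Let n, m, p be positive integers, and let A, U be real n×n matrices, B a real n×m matrix, and C_p a real p×n matrix. Let X be a real symmetric positive definite n×n matrix and let γ₁ > 0, γ₂ ≥ 0 be real scalars. If the 4×4 block matrix L₈(X,γ₁,γ₂) := [[−I, 0, C_p X, 0], [0, −γ₁ I, I, 0], [X C_pᵀ, I, X Aᵀ + A X − X Uᵀ − U X, B], [0, 0, Bᵀ, −γ₂ I]] is negative semidefinite, then the 3×3 block matrix L₁₃(X,γ₁,γ₂) := [[−I, C_p X, 0], [X C_pᵀ, X Aᵀ + A X − γ₁ X Uᵀ U X, B], [0, Bᵀ, −γ₂ I]] is negative semidefinite. (This is the precise matrix content of the claim that the SDP with constraint L₈ ⪯ 0 is a relaxation of the SDP with the exact bilinear constraint.) -/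

import Mathlib

open Matrix

/-- The relaxed LMI `L₈ ⪯ 0` (obtained via the Young relation) implies the exact
bilinear LMI `L₁₃ ⪯ 0`: the SDP with constraint `L₈ ⪯ 0` is a relaxation of the SDP
with the exact bilinear constraint. -/
theorem stmt_0 {n m p : ℕ} (hn : 0 < n) (hm : 0 < m) (hp : 0 < p)
    (A U : Matrix (Fin n) (Fin n) ℝ) (B : Matrix (Fin n) (Fin m) ℝ)
    (Cp : Matrix (Fin p) (Fin n) ℝ)
    (X : Matrix (Fin n) (Fin n) ℝ) (hXsym : X.IsSymm) (hX : X.PosDef)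
    (γ₁ γ₂ : ℝ) (hγ₁ : 0 < γ₁) (hγ₂ : 0 ≤ γ₂)
    (h8 : (-(Matrix.fromBlocks
        (Matrix.fromBlocks (-1) 0 0 (-(γ₁ • (1 : Matrix (Fin n) (Fin n) ℝ))))
        (Matrix.fromBlocks (Cp * X) 0 1 0)
        (Matrix.fromBlocks (X * Cpᵀ) 1 0 0)
        (Matrix.fromBlocks (X * Aᵀ + A * X - X * Uᵀ - U * X) B
          Bᵀ (-(γ₂ • (1 : Matrix (Fin m) (Fin m) ℝ)))))).PosSemidef) :
    (-(Matrix.fromBlocks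
        (Matrix.fromBlocks (-1) (Cp * X) (X * Cpᵀ)
          (X * Aᵀ + A * X - γ₁ • (X * Uᵀ * U * X)))
        (Matrix.fromRows 0 B)
        (Matrix.fromCols 0 Bᵀ)
        (-(γ₂ • (1 : Matrix (Fin m) (Fin m) ℝ))))).PosSemidef := by
  set K : Matrix (Fin n) (Fin n) ℝ := (γ₁⁻¹ • (2 : ℝ)) • 1 - U * X with hK
  set E : Matrix ((Fin p ⊕ Fin n) ⊕ (Fin n ⊕ Fin m)) ((Fin p ⊕ Fin n) ⊕ Fin m) ℝ :=
    fromBlocks (fromBlocks 1 0 0 K) 0 (fromBlocks 0 1 0 0) (fromRows 0 1) with hE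
  have key : (-(Matrix.fromBlocks
        (Matrix.fromBlocks (-1) (Cp * X) (X * Cpᵀ)
          (X * Aᵀ + A * X - γ₁ • (X * Uᵀ * U * X)))
        (Matrix.fromRows 0 B)
        (Matrix.fromCols 0 Bᵀ)
        (-(γ₂ • (1 : Matrix (Fin m) (Fin m) ℝ))))) =
      Eᴴ * (-(Matrix.fromBlocks
        (Matrix.fromBlocks (-1) 0 0 (-(γ₁ • (1 : Matrix (Fin n) (Fin n) ℝ))))
        (Matrix.fromBlocks (Cp * X) 0 1 0)
        (Matrix.fromBlocks (X * Cpᵀ) 1 0 0)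
        (Matrix.fromBlocks (X * Aᵀ + A * X - X * Uᵀ - U * X) B
          Bᵀ (-(γ₂ • (1 : Matrix (Fin m) (Fin m) ℝ)))))) * E := by
    rw [hE]
    rw [conjTranspose_eq_transpose_of_trivial]
    simp only [fromBlocks_transpose, transpose_fromRows, transpose_one, transpose_zero,
      fromBlocks_multiply, fromBlocks_mul_fromRows, fromCols_mul_fromBlocks,
      fromRows_mul_fromCols, fromCols_mul_fromRows, mul_fromCols, fromRows_mul,
      Matrix.mul_one, Matrix.one_mul, Matrix.mul_zero, Matrix.zero_mul,
      add_zero, zero_add, Matrix.neg_mul, Matrix.mul_neg,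
      fromBlocks_neg, neg_neg, neg_zero, fromBlocks_add,
      fromRows_neg, fromCols_neg, fromCols_zero, hK]
    rw [Matrix.IsSymm] at hXsym
    rw [fromBlocks_inj, fromBlocks_inj]
    refine ⟨⟨rfl, rfl, rfl, ?_⟩, rfl, rfl, rfl⟩
    simp only [transpose_sub, transpose_smul, transpose_one, transpose_mul, hXsym,
      Matrix.mul_smul, Matrix.smul_mul, sub_mul, mul_sub, add_mul, mul_add,
      Matrix.mul_one, Matrix.one_mul, smul_smul, smul_sub, smul_add, Matrix.mul_assoc,
      Matrix.neg_mul, Matrix.mul_neg, neg_sub, neg_add, neg_neg, one_smul]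
    match_scalars <;> simp only [smul_eq_mul, mul_one, neg_neg] <;> (field_simp; try ring)
  rw [key]
  exact h8.conjTranspose_mul_mul_same E
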